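/- As ξ → 0⁺, the determinant satisfies det Σ(ξ) / ν(ξ)^{n−1} → det(D) · (1'D^{-1}1); that is, det Σ(ξ) = ν(ξ)^{n−1} det(D)(1'D^{-1}1)(1 + o(1)). -/

import Mathlib

open Matrix Filter Topology

/-- The all-ones vector. -/
def ones (n : ℕ) : Fin n → ℝ := fun _ => 1

lemma det_smul_inv_dot {n : ℕ} (M : Matrix (Fin n) (Fin n) ℝ) (hM : IsUnit M.det) :
    M.det * (ones n ⬝ᵥ M⁻¹ *ᵥ ones n) = ones n ⬝ᵥ M.adjugate *ᵥ ones n := by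
  rw [Matrix.inv_def, Ring.inverse_eq_inv', smul_mulVec, dotProduct_smul,
    smul_eq_mul, ← mul_assoc, mul_inv_cancel₀ hM.ne_zero, one_mul]

lemma det_ones_add_smul {n : ℕ} (hn : 1 ≤ n) (c : ℝ) (hc : c ≠ 0)
    (M : Matrix (Fin n) (Fin n) ℝ) (hM : IsUnit M.det) :
    (vecMulVec (ones n) (ones n) + c • M).det
      = c ^ n * M.det + c ^ (n - 1) * (ones n ⬝ᵥ (M.adjugate) *ᵥ ones n) := by
  have hdM : M.det ≠ 0 := hM.ne_zero
  have hA : IsUnit (c • M).det := by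
    rw [det_smul, Fintype.card_fin]; exact (isUnit_iff_ne_zero.mpr (pow_ne_zero n hc)).mul hM
  haveI : Invertible c := invertibleOfNonzero hc
  rw [add_comm, vecMulVec_eq (Fin 1),
    det_add_mul _ _ hA, M.inv_smul c hM,
    invOf_eq_inv c, det_smul, Fintype.card_fin]
  erw [det_fin_one]
  have hentry : ((1 + replicateRow (Fin 1) (ones n) * (c⁻¹ • M⁻¹) * replicateCol (Fin 1) (ones n) :
        Matrix (Fin 1) (Fin 1) ℝ)) 0 0
      = 1 + c⁻¹ * (ones n ⬝ᵥ M⁻¹ *ᵥ ones n) := by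
    simp [ones, Matrix.mul_apply, Matrix.one_apply, dotProduct, Matrix.mulVec, Matrix.replicateRow,
      Matrix.replicateCol, Finset.mul_sum, Finset.sum_mul, mul_comm, mul_assoc, mul_left_comm]
    rw [Finset.sum_comm]
  rw [hentry, ← det_smul_inv_dot M hM]
  have hcn : c ^ n = c ^ (n - 1) * c := by rw [← pow_succ, Nat.sub_add_cancel hn]
  rw [hcn]
  field_simp

/-- as ξ → 0⁺, det Σ(ξ) / ν(ξ)^{n−1} → det(D)·(1'D⁻¹1). -/
theorem det_asymptotics
    (n : ℕ) (hn : 2 ≤ n)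
    (D : Matrix (Fin n) (Fin n) ℝ) (hDsymm : D.IsSymm) (hDdet : IsUnit D.det)
    (hD1 : ones n ⬝ᵥ D⁻¹.mulVec (ones n) ≠ 0)
    (ν : ℝ → ℝ) (hνpos : ∀ ξ > 0, 0 < ν ξ)
    (hν0 : Tendsto ν (𝓝[>] 0) (𝓝 0))
    (Sg : ℝ → Matrix (Fin n) (Fin n) ℝ) (hpd : ∀ ξ > 0, (Sg ξ).PosDef)
    (E : ℝ → Matrix (Fin n) (Fin n) ℝ)
    (hE : ∀ i j, Tendsto (fun ξ => E ξ i j) (𝓝[>] 0) (𝓝 0))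
    (hdecomp : ∀ ξ > 0, Sg ξ = vecMulVec (ones n) (ones n) + ν ξ • (D + E ξ)) :
    Tendsto (fun ξ => (Sg ξ).det / ν ξ ^ (n - 1)) (𝓝[>] 0)
      (𝓝 (D.det * (ones n ⬝ᵥ D⁻¹.mulVec (ones n)))) := by
  have hMt : Tendsto (fun ξ => D + E ξ) (𝓝[>] 0) (𝓝 D) := by
    apply tendsto_pi_nhds.mpr
    intro i
    rw [tendsto_pi_nhds]
    intro j
    have := (hE i j).const_add (D i j)
    simpa using this
  have hdet : Tendsto (fun ξ => (D + E ξ).det) (𝓝[>] 0) (𝓝 D.det) :=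
    (Continuous.matrix_det continuous_id).continuousAt.tendsto.comp hMt
  have hadj : Tendsto (fun ξ => ones n ⬝ᵥ ((D + E ξ).adjugate) *ᵥ ones n) (𝓝[>] 0)
      (𝓝 (ones n ⬝ᵥ D.adjugate *ᵥ ones n)) := by
    have hc : Continuous fun A : Matrix (Fin n) (Fin n) ℝ => ones n ⬝ᵥ A.adjugate *ᵥ ones n :=
      continuous_const.dotProduct
        ((Continuous.matrix_adjugate continuous_id).matrix_mulVec continuous_const)
    exact hc.continuousAt.tendsto.comp hMt
  have hev : ∀ᶠ ξ in 𝓝[>] (0:ℝ), IsUnit (D + E ξ).det := by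
    have : ∀ᶠ ξ in 𝓝[>] (0:ℝ), (D + E ξ).det ≠ 0 :=
      hdet (isOpen_ne.mem_nhds hDdet.ne_zero)
    exact this.mono fun ξ h => isUnit_iff_ne_zero.mpr h
  have hg : Tendsto (fun ξ => ν ξ * (D + E ξ).det + ones n ⬝ᵥ ((D + E ξ).adjugate) *ᵥ ones n)
      (𝓝[>] 0) (𝓝 (0 * D.det + ones n ⬝ᵥ D.adjugate *ᵥ ones n)) := (hν0.mul hdet).add hadj
  rw [zero_mul, zero_add, ← det_smul_inv_dot D hDdet] at hg
  refine hg.congr' ?_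
  filter_upwards [hev, self_mem_nhdsWithin] with ξ hu hξ
  have hξ' : (0:ℝ) < ξ := hξ
  have hc : ν ξ ≠ 0 := (hνpos ξ hξ').ne'
  rw [hdecomp ξ hξ', det_ones_add_smul (by omega) (ν ξ) hc (D + E ξ) hu]
  have hcn : ν ξ ^ n = ν ξ ^ (n - 1) * ν ξ := by
    rw [← pow_succ, Nat.sub_add_cancel (by omega)]
  rw [hcn]
  field_simp
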